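/- Let G be a finite simple graph and F a uniform random c-coloring of its n vertices. For a color i, the variance of the number L^i of i-isolated vertices equals E[L^i](1 - E[L^i]) + (c_i^{\underline{2}}/n^{\underline{2}}) Σ_{(u,v): u ≠ v, uv ∉ E(G)} (n - c_i)^{\underline{b(u,v)}} / (n - 2)^{\underline{b(u,v)}}, where b(u,v) = |N_G(u) ∪ N_G(v)| and the sum is over ordered pairs of distinct non-adjacent vertices. -/

import Mathlib

/-- The set of `c`-colorings of `V`. -/
def colorings (V : Type) [Fintype V] [DecidableEq V] (s : ℕ) (c : Fin s → ℕ) :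
    Finset (V → Fin s) :=
  Finset.univ.filter fun f =>
    ∀ i, (Finset.univ.filter fun v => f v = i).card = c i

/-- `L^i f` : the number of `i`-isolated vertices under coloring `f`. -/
def isolatedCount (V : Type) [Fintype V] [DecidableEq V] (G : SimpleGraph V)
    [DecidableRel G.Adj] (s : ℕ) (i : Fin s) (f : V → Fin s) : ℕ :=
  (Finset.univ.filter fun v =>
    f v = i ∧ ∀ w ∈ G.neighborFinset v, f w ≠ i).card

set_option linter.unusedSectionVars false

open Finset

variable {V : Type} [Fintype V] [DecidableEq V] {s : ℕ}

/-- permutation mapping T onto S -/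
lemma exists_perm_maps (S T : Finset V) (h : S.card = T.card) :
    ∃ e : Equiv.Perm V, ∀ x, e x ∈ S ↔ x ∈ T := by
  classical
  have h1 : Fintype.card {x // x ∈ T} = Fintype.card {x // x ∈ S} := by
    simp [Fintype.card_coe, h]
  have h2 : Fintype.card {x // ¬ x ∈ T} = Fintype.card {x // ¬ x ∈ S} := by
    rw [Fintype.card_subtype_compl, Fintype.card_subtype_compl]
    simp [Fintype.card_coe, h]
  let e1 := Fintype.equivOfCardEq h1
  let e2 := Fintype.equivOfCardEq h2
  refine ⟨Equiv.subtypeCongr e1 e2, fun x => ?_⟩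
  by_cases hx : x ∈ T
  · simp only [Equiv.subtypeCongr, Equiv.trans_apply, Equiv.sumCompl_symm_apply_of_pos hx,
      Equiv.sumCongr_apply, Sum.map_inl, Equiv.sumCompl_apply_inl]
    exact iff_of_true (e1 ⟨x, hx⟩).2 hx
  · simp only [Equiv.subtypeCongr, Equiv.trans_apply, Equiv.sumCompl_symm_apply_of_neg hx,
      Equiv.sumCongr_apply, Sum.map_inr, Equiv.sumCompl_apply_inr]
    exact iff_of_false (e2 ⟨x, hx⟩).2 hx

lemma fiber_comp (f : V → Fin s) (e : Equiv.Perm V) (j : Fin s) :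
    (univ.filter fun v => f (e v) = j) = (univ.filter fun v => f v = j).map e.symm.toEmbedding := by
  ext v
  simp [Finset.mem_map_equiv]

lemma comp_mem_colorings (c : Fin s → ℕ) (f : V → Fin s) (e : Equiv.Perm V)
    (hf : f ∈ colorings V s c) : (f ∘ e) ∈ colorings V s c := by
  simp only [colorings, mem_filter, mem_univ, true_and] at hf ⊢
  intro j
  have : (filter (fun v => (f ∘ ⇑e) v = j) univ) = (univ.filter fun v => f (e v) = j) := rfl
  rw [this, fiber_comp, card_map]
  exact hf j

lemma card_fiber_const (c : Fin s → ℕ) (i : Fin s) (S T : Finset V)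
    (hS : S.card = c i) (hT : T.card = c i) :
    ((colorings V s c).filter fun f => univ.filter (fun v => f v = i) = S).card =
    ((colorings V s c).filter fun f => univ.filter (fun v => f v = i) = T).card := by
  classical
  obtain ⟨e, he⟩ := exists_perm_maps S T (hS.trans hT.symm)
  apply Finset.card_bij' (fun f _ => f ∘ e) (fun g _ => g ∘ e.symm)
  · intro f hf
    simp only [mem_filter] at hf ⊢
    refine ⟨comp_mem_colorings c f e hf.1, ?_⟩
    ext v
    simp only [mem_filter, mem_univ, true_and, Function.comp_apply]
    rw [← he v, ← hf.2]
    simp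
  · intro g hg
    simp only [mem_filter] at hg ⊢
    refine ⟨comp_mem_colorings c g e.symm hg.1, ?_⟩
    ext v
    simp only [mem_filter, mem_univ, true_and, Function.comp_apply]
    constructor
    · intro h
      have : e.symm v ∈ T := by rw [← hg.2]; simp [h]
      rwa [← he, Equiv.apply_symm_apply] at this
    · intro h
      have : e.symm v ∈ T := by rw [← he, Equiv.apply_symm_apply]; exact h
      rw [← hg.2] at this
      simpa using this
  · intro f _; ext v; simp
  · intro g _; ext v; simp

lemma colorings_nonempty (n : ℕ) (hn : Fintype.card V = n) (c : Fin s → ℕ)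
    (hsum : ∑ i, c i = n) : (colorings V s c).Nonempty := by
  classical
  have hcard : Fintype.card V = Fintype.card (Σ j : Fin s, Fin (c j)) := by
    simp [Fintype.card_sigma, hn, hsum]
  let g : V ≃ Σ j : Fin s, Fin (c j) := Fintype.equivOfCardEq hcard
  refine ⟨fun v => (g v).1, ?_⟩
  simp only [colorings, mem_filter, mem_univ, true_and]
  intro j
  have h1 : (univ.filter fun v => (g v).1 = j)
      = (univ.filter fun x : Σ j' : Fin s, Fin (c j') => x.1 = j).map g.symm.toEmbedding := by
    ext v; simp [Finset.mem_map_equiv]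
  have h2 : (univ.filter fun x : Σ j' : Fin s, Fin (c j') => x.1 = j)
      = ({j} : Finset (Fin s)).sigma fun j' => (univ : Finset (Fin (c j'))) := by
    ext x; simp [Finset.mem_sigma]
  rw [h1, card_map, h2, Finset.card_sigma]
  simp

lemma total_eq (n : ℕ) (hn : Fintype.card V = n) (c : Fin s → ℕ) (i : Fin s) (S : Finset V)
    (hS : S.card = c i) :
    (colorings V s c).card =
      n.choose (c i) * ((colorings V s c).filter fun f => univ.filter (fun v => f v = i) = S).card := by
  classical
  rw [Finset.card_eq_sum_card_fiberwise
    (f := fun f => univ.filter (fun v => f v = i)) (t := Finset.powersetCard (c i) univ)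
    (fun f hf => by
      simp only [Finset.mem_coe, Finset.mem_powersetCard]
      refine ⟨Finset.subset_univ _, ?_⟩
      simp only [Finset.mem_coe, colorings, mem_filter] at hf
      exact hf.2 i)]
  rw [Finset.sum_congr rfl (fun T hT => card_fiber_const c i T S
    (by simpa using (Finset.mem_powersetCard.1 hT).2) hS)]
  rw [Finset.sum_const, Finset.card_powersetCard, card_univ, hn, smul_eq_mul]

lemma count_eq (c : Fin s → ℕ) (i : Fin s) (A B : Finset V) (S : Finset V) (hS : S.card = c i) :
    ((colorings V s c).filter fun f => (∀ v ∈ A, f v = i) ∧ ∀ w ∈ B, f w ≠ i).card =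
      ((Finset.powersetCard (c i) univ).filter fun T => A ⊆ T ∧ Disjoint T B).card *
        ((colorings V s c).filter fun f => univ.filter (fun v => f v = i) = S).card := by
  classical
  rw [Finset.card_eq_sum_card_fiberwise
    (f := fun f => univ.filter (fun v => f v = i))
    (t := (Finset.powersetCard (c i) univ).filter fun T => A ⊆ T ∧ Disjoint T B)
    (fun f hf => by
      obtain ⟨hcol, hA, hB⟩ := Finset.mem_filter.1 hf
      have hfib : (univ.filter fun v => f v = i).card = c i := by
        have := (Finset.mem_filter.1 hcol).2
        exact this i
      refine Finset.mem_filter.2 ⟨Finset.mem_powersetCard.2 ⟨Finset.subset_univ _, hfib⟩, ?_, ?_⟩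
      · intro v hv; simp [hA v hv]
      · rw [Finset.disjoint_left]
        intro v hv hvB
        simp only [mem_filter, mem_univ, true_and] at hv
        exact hB v hvB hv)]
  have hcong : ∀ T ∈ (Finset.powersetCard (c i) univ).filter fun T => A ⊆ T ∧ Disjoint T B,
      (((colorings V s c).filter fun f => (∀ v ∈ A, f v = i) ∧ ∀ w ∈ B, f w ≠ i).filter
        fun f => univ.filter (fun v => f v = i) = T).card =
      ((colorings V s c).filter fun f => univ.filter (fun v => f v = i) = S).card := by
    intro T hT
    simp only [mem_filter, Finset.mem_powersetCard] at hT
    obtain ⟨⟨_, hTc⟩, hAT, hTB⟩ := hT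
    have : (((colorings V s c).filter fun f => (∀ v ∈ A, f v = i) ∧ ∀ w ∈ B, f w ≠ i).filter
        fun f => univ.filter (fun v => f v = i) = T) =
        ((colorings V s c).filter fun f => univ.filter (fun v => f v = i) = T) := by
      ext f
      simp only [mem_filter]
      constructor
      · rintro ⟨⟨h1, _⟩, h2⟩; exact ⟨h1, h2⟩
      · rintro ⟨h1, h2⟩
        refine ⟨⟨h1, ?_, ?_⟩, h2⟩
        · intro v hv
          have : v ∈ T := hAT hv
          rw [← h2] at this
          simpa using this
        · intro w hw hfw
          have : w ∈ T := by rw [← h2]; simp [hfw]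
          exact (Finset.disjoint_left.1 hTB this) hw
    rw [this]
    exact card_fiber_const c i T S hTc hS
  rw [Finset.sum_congr rfl hcong, Finset.sum_const, smul_eq_mul]

lemma M_eq (n k : ℕ) (hn : Fintype.card V = n) (A B : Finset V) (hd : Disjoint A B)
    (ha : A.card ≤ k) :
    ((Finset.powersetCard k univ).filter fun T => A ⊆ T ∧ Disjoint T B).card =
      (n - (A.card + B.card)).choose (k - A.card) := by
  classical
  have hcard : (univ \ (A ∪ B)).card = n - (A.card + B.card) := by
    rw [Finset.card_sdiff_of_subset (Finset.subset_univ _), card_univ, hn,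
      Finset.card_union_of_disjoint hd]
  rw [← hcard, ← Finset.card_powersetCard]
  apply Finset.card_bij' (fun T _ => T \ A) (fun T _ => T ∪ A)
  · intro T hT
    simp only [mem_filter, Finset.mem_powersetCard] at hT ⊢
    obtain ⟨⟨_, hTk⟩, hAT, hTB⟩ := hT
    refine ⟨?_, ?_⟩
    · intro x hx
      simp only [Finset.mem_sdiff, Finset.mem_union, Finset.mem_univ, true_and] at hx ⊢
      obtain ⟨hxT, hxA⟩ := hx
      exact fun h => h.elim hxA (fun hB' => Finset.disjoint_left.1 hTB hxT hB')
    · rw [Finset.card_sdiff_of_subset hAT, hTk]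
  · intro T hT
    simp only [mem_filter, Finset.mem_powersetCard] at hT ⊢
    obtain ⟨hTsub, hTc⟩ := hT
    have hTA : Disjoint T A := by
      rw [Finset.disjoint_left]
      intro x hx hxA
      have := hTsub hx
      simp only [Finset.mem_sdiff, Finset.mem_union] at this
      exact this.2 (Or.inl hxA)
    have hTB : Disjoint T B := by
      rw [Finset.disjoint_left]
      intro x hx hxB
      have := hTsub hx
      simp only [Finset.mem_sdiff, Finset.mem_union] at this
      exact this.2 (Or.inr hxB)
    refine ⟨⟨Finset.subset_univ _, ?_⟩, Finset.subset_union_right, ?_⟩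
    · rw [Finset.card_union_of_disjoint hTA, hTc]
      omega
    · rw [Finset.disjoint_left]
      intro x hx hxB
      rcases Finset.mem_union.1 hx with h | h
      · exact Finset.disjoint_left.1 hTB h hxB
      · exact Finset.disjoint_left.1 hd h hxB
  · intro T hT
    simp only [mem_filter, Finset.mem_powersetCard] at hT
    exact Finset.sdiff_union_of_subset hT.2.1
  · intro T hT
    simp only [Finset.mem_powersetCard] at hT
    apply Finset.union_sdiff_cancel_right
    rw [Finset.disjoint_left]
    intro x hx hxA
    have := hT.1 hx
    simp only [Finset.mem_sdiff, Finset.mem_union] at this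
    exact this.2 (Or.inl hxA)

lemma cast_df (m k : ℕ) (h : k ≤ m) : (m.descFactorial k : ℚ) = (Nat.factorial m : ℚ) / (Nat.factorial (m - k) : ℚ) := by
  rw [eq_div_iff (by exact_mod_cast (Nat.factorial_ne_zero _))]
  norm_cast
  rw [mul_comm]
  exact Nat.factorial_mul_descFactorial h

lemma arith (n ci b : ℕ) (h1 : 1 ≤ ci) (h2 : ci ≤ n) (hb : b ≤ n - 2) (hn : 2 ≤ n) :
    (((n - (2 + b)).choose (ci - 2) * (if 2 ≤ ci then 1 else 0) : ℕ) : ℚ) =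
      n.choose ci * (((ci.descFactorial 2 : ℚ) / (n.descFactorial 2)) *
        (((n - ci).descFactorial b : ℚ) / ((n - 2).descFactorial b))) := by
  by_cases hci : 2 ≤ ci
  · simp only [hci, if_pos, mul_one]
    by_cases hcb : ci + b ≤ n
    · have e1 : (n.descFactorial 2 : ℚ) = (Nat.factorial n : ℚ) / (Nat.factorial (n - 2) : ℚ) := cast_df n 2 hn
      have e2 : ((n - 2).descFactorial b : ℚ) = (Nat.factorial (n - 2) : ℚ) / (Nat.factorial (n - (2 + b)) : ℚ) := by
        rw [cast_df (n - 2) b hb, show n - 2 - b = n - (2 + b) by omega]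
      have e3 : (ci.descFactorial 2 : ℚ) = (Nat.factorial ci : ℚ) / (Nat.factorial (ci - 2) : ℚ) := cast_df ci 2 hci
      have e4 : ((n - ci).descFactorial b : ℚ) = (Nat.factorial (n - ci) : ℚ) / (Nat.factorial (n - ci - b) : ℚ) := by
        rw [cast_df (n - ci) b (by omega)]
      have e5 : ((n - (2 + b)).choose (ci - 2) : ℚ) =
          (Nat.factorial (n - (2 + b)) : ℚ) / ((Nat.factorial (ci - 2) : ℚ) * (Nat.factorial (n - ci - b) : ℚ)) := by
        rw [Nat.cast_choose ℚ (show ci - 2 ≤ n - (2 + b) by omega),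
          show n - (2 + b) - (ci - 2) = n - ci - b by omega]
      have e6 : (n.choose ci : ℚ) = (Nat.factorial n : ℚ) / ((Nat.factorial ci : ℚ) * (Nat.factorial (n - ci) : ℚ)) := Nat.cast_choose ℚ h2
      rw [e1, e2, e3, e4, e5, e6]
      have ne : ∀ m : ℕ, ((Nat.factorial m : ℕ) : ℚ) ≠ 0 := fun m => by
        exact_mod_cast Nat.factorial_ne_zero m
      field_simp
    · rw [Nat.choose_eq_zero_of_lt (by omega),
        Nat.descFactorial_eq_zero_iff_lt.2 (show n - ci < b by omega)]
      simp
  · have : ci = 1 := by omega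
    subst this
    simp [hci]

/-- Theorem 1.3: under a uniform random `c`-coloring, the variance of the number
`L^i` of `i`-isolated vertices equals
`E[L^i](1 - E[L^i]) + (cᵢ^(2)/n^(2)) Σ_{u ≠ v, uv ∉ E} (n-cᵢ)^(b(u,v))/(n-2)^(b(u,v))`,
where `b(u,v) = |N(u) ∪ N(v)|` and the sum is over ordered pairs of distinct
non-adjacent vertices. -/
theorem variance_isolated (V : Type) [Fintype V] [DecidableEq V]
    (G : SimpleGraph V) [DecidableRel G.Adj] (n s : ℕ)
    (hn : Fintype.card V = n) (c : Fin s → ℕ) (hpos : ∀ i, 0 < c i)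
    (hsum : ∑ i, c i = n) (i : Fin s) (EL : ℚ)
    (hEL : EL = (∑ f ∈ colorings V s c, (isolatedCount V G s i f : ℚ)) /
        ((colorings V s c).card : ℚ)) :
    (∑ f ∈ colorings V s c, (isolatedCount V G s i f : ℚ) ^ 2) /
          ((colorings V s c).card : ℚ) -
        ((∑ f ∈ colorings V s c, (isolatedCount V G s i f : ℚ)) /
          ((colorings V s c).card : ℚ)) ^ 2
      = EL * (1 - EL) +
          (((c i).descFactorial 2 : ℚ) / (n.descFactorial 2 : ℚ)) *
            ∑ p ∈ (Finset.univ : Finset V).offDiag.filter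
                (fun p => ¬ G.Adj p.1 p.2),
              ((n - c i).descFactorial
                  ((G.neighborFinset p.1 ∪ G.neighborFinset p.2).card) : ℚ) /
                ((n - 2).descFactorial
                  ((G.neighborFinset p.1 ∪ G.neighborFinset p.2).card) : ℚ) := by
  classical
  have hcin : c i ≤ n := by
    rw [← hsum]
    exact Finset.single_le_sum (fun j _ => Nat.zero_le (c j)) (mem_univ i)
  have hne : (colorings V s c).Nonempty := colorings_nonempty n hn c hsum
  have hT0 : ((colorings V s c).card : ℚ) ≠ 0 := by
    exact_mod_cast Finset.card_ne_zero.2 hne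
  set P := (Finset.univ : Finset V).offDiag.filter (fun p => ¬ G.Adj p.1 p.2) with hP
  set Pf : (V → Fin s) → V → Prop :=
    fun f v => f v = i ∧ ∀ w ∈ G.neighborFinset v, f w ≠ i with hPf
  -- obtain a reference fiber S₀
  obtain ⟨f₀, hf₀⟩ := hne
  set S₀ : Finset V := univ.filter (fun v => f₀ v = i) with hS₀
  have hS₀c : S₀.card = c i := (Finset.mem_filter.1 hf₀).2 i
  -- Step 1 : pointwise square expansion
  have step1 : ∀ f : V → Fin s, (isolatedCount V G s i f) ^ 2 =
      isolatedCount V G s i f + ((univ.filter (Pf f)).offDiag).card := by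
    intro f
    rw [Finset.offDiag_card]
    have hiso : isolatedCount V G s i f = (univ.filter (Pf f)).card := rfl
    rw [hiso]
    set m := (univ.filter (Pf f)).card
    have hm : m ≤ m * m := by
      rcases Nat.eq_zero_or_pos m with h | h
      · simp [h]
      · exact Nat.le_mul_of_pos_left m h
    rw [pow_two]
    omega
  -- Step 2 : offDiag of filter
  have step2 : ∀ f : V → Fin s, (univ.filter (Pf f)).offDiag =
      (Finset.univ : Finset V).offDiag.filter (fun p => Pf f p.1 ∧ Pf f p.2) := by
    intro f
    ext p
    simp only [Finset.mem_offDiag, Finset.mem_filter, Finset.mem_univ, true_and]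
    tauto
  -- Step 3 : swap sums
  have step3 : ∑ f ∈ colorings V s c,
        ((Finset.univ : Finset V).offDiag.filter (fun p => Pf f p.1 ∧ Pf f p.2)).card
      = ∑ p ∈ (Finset.univ : Finset V).offDiag,
          ((colorings V s c).filter (fun f => Pf f p.1 ∧ Pf f p.2)).card := by
    simp_rw [Finset.card_filter]
    rw [Finset.sum_comm]
  -- Step 4 : adjacent pairs give zero
  have step4 : ∑ p ∈ (Finset.univ : Finset V).offDiag,
        ((colorings V s c).filter (fun f => Pf f p.1 ∧ Pf f p.2)).card
      = ∑ p ∈ P, ((colorings V s c).filter (fun f => Pf f p.1 ∧ Pf f p.2)).card := by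
    rw [hP]
    refine (Finset.sum_filter_of_ne ?_).symm
    intro p _ hne0 hadj
    apply hne0
    rw [Finset.card_eq_zero, Finset.eq_empty_iff_forall_notMem]
    intro f hf
    obtain ⟨_, h1, h2⟩ := Finset.mem_filter.1 hf
    exact h1.2 p.2 ((G.mem_neighborFinset p.1 p.2).2 hadj) h2.1
  -- Step 5 : rewrite each pair condition in A/B form
  have step5 : ∀ p ∈ P,
      ((colorings V s c).filter (fun f => Pf f p.1 ∧ Pf f p.2)).card =
      ((colorings V s c).filter fun f =>
        (∀ v ∈ ({p.1, p.2} : Finset V), f v = i) ∧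
        ∀ w ∈ G.neighborFinset p.1 ∪ G.neighborFinset p.2, f w ≠ i).card := by
    intro p hp
    congr 1
    apply Finset.filter_congr
    intro f _
    simp only [hPf, Finset.mem_insert, Finset.mem_singleton, Finset.mem_union]
    constructor
    · rintro ⟨⟨h1, h2⟩, h3, h4⟩
      refine ⟨?_, ?_⟩
      · rintro v (rfl | rfl) <;> assumption
      · rintro w (hw | hw)
        · exact h2 w hw
        · exact h4 w hw
    · rintro ⟨h1, h2⟩
      exact ⟨⟨h1 _ (Or.inl rfl), fun w hw => h2 w (Or.inl hw)⟩,
             h1 _ (Or.inr rfl), fun w hw => h2 w (Or.inr hw)⟩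
  -- key identity over ℕ
  have key : ∑ f ∈ colorings V s c, (isolatedCount V G s i f) ^ 2
      = (∑ f ∈ colorings V s c, isolatedCount V G s i f)
        + ∑ p ∈ P, ((colorings V s c).filter fun f =>
            (∀ v ∈ ({p.1, p.2} : Finset V), f v = i) ∧
            ∀ w ∈ G.neighborFinset p.1 ∪ G.neighborFinset p.2, f w ≠ i).card := by
    calc ∑ f ∈ colorings V s c, (isolatedCount V G s i f) ^ 2
        = ∑ f ∈ colorings V s c, (isolatedCount V G s i f
            + ((univ.filter (Pf f)).offDiag).card) := by
          exact Finset.sum_congr rfl fun f _ => step1 f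
      _ = (∑ f ∈ colorings V s c, isolatedCount V G s i f)
            + ∑ f ∈ colorings V s c, ((univ.filter (Pf f)).offDiag).card := by
          rw [Finset.sum_add_distrib]
      _ = (∑ f ∈ colorings V s c, isolatedCount V G s i f)
            + ∑ p ∈ P, ((colorings V s c).filter (fun f => Pf f p.1 ∧ Pf f p.2)).card := by
          rw [Finset.sum_congr rfl fun f _ => congrArg Finset.card (step2 f), step3, step4]
      _ = _ := by
          rw [Finset.sum_congr rfl step5]
  -- per pair evaluation
  have hpair : ∀ p ∈ P,
      ((((colorings V s c).filter fun f =>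
          (∀ v ∈ ({p.1, p.2} : Finset V), f v = i) ∧
          ∀ w ∈ G.neighborFinset p.1 ∪ G.neighborFinset p.2, f w ≠ i).card : ℕ) : ℚ)
      = ((colorings V s c).card : ℚ) *
          ((((c i).descFactorial 2 : ℚ) / (n.descFactorial 2 : ℚ)) *
            (((n - c i).descFactorial
                ((G.neighborFinset p.1 ∪ G.neighborFinset p.2).card) : ℚ) /
              ((n - 2).descFactorial
                ((G.neighborFinset p.1 ∪ G.neighborFinset p.2).card) : ℚ))) := by
    intro p hp
    obtain ⟨hpo, hnadj⟩ := Finset.mem_filter.1 hp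
    obtain ⟨-, -, hne12⟩ := Finset.mem_offDiag.1 hpo
    set A : Finset V := {p.1, p.2} with hA
    set B : Finset V := G.neighborFinset p.1 ∪ G.neighborFinset p.2 with hB
    have hA2 : A.card = 2 := by
      rw [hA, Finset.card_insert_of_notMem (by simp [hne12]), Finset.card_singleton]
    have hdAB : Disjoint A B := by
      rw [Finset.disjoint_left]
      intro x hx hxB
      rcases Finset.mem_insert.1 hx with rfl | hx1
      · rcases Finset.mem_union.1 hxB with h | h
        · exact G.irrefl ((G.mem_neighborFinset _ _).1 h)
        · exact hnadj (((G.mem_neighborFinset _ _).1 h).symm)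
      · rcases Finset.mem_singleton.1 hx1 with rfl
        rcases Finset.mem_union.1 hxB with h | h
        · exact hnadj ((G.mem_neighborFinset _ _).1 h)
        · exact G.irrefl ((G.mem_neighborFinset _ _).1 h)
    have hBsub : B ⊆ univ \ A := by
      intro x hx
      rw [Finset.mem_sdiff]
      exact ⟨Finset.mem_univ x, fun hxA => Finset.disjoint_left.1 hdAB hxA hx⟩
    have hbn : B.card ≤ n - 2 := by
      have := Finset.card_le_card hBsub
      rwa [Finset.card_sdiff_of_subset (Finset.subset_univ _), card_univ, hn, hA2] at this
    have hn2 : 2 ≤ n := by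
      have := Finset.card_le_card (Finset.subset_univ A)
      rwa [card_univ, hn, hA2] at this
    -- M in closed form
    have hM : ((Finset.powersetCard (c i) univ).filter
          fun T => A ⊆ T ∧ Disjoint T B).card
        = (n - (2 + B.card)).choose (c i - 2) * (if 2 ≤ c i then 1 else 0) := by
      split_ifs with hci
      · rw [mul_one, M_eq n (c i) hn A B hdAB (by rw [hA2]; exact hci), hA2]
      · rw [mul_zero, Finset.card_eq_zero, Finset.eq_empty_iff_forall_notMem]
        intro T hT
        obtain ⟨hT1, hT2, -⟩ := Finset.mem_filter.1 hT
        have hle := Finset.card_le_card hT2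
        rw [hA2, (Finset.mem_powersetCard.1 hT1).2] at hle
        exact hci hle
    have hcount := count_eq c i A B S₀ hS₀c
    have htot := total_eq n hn c i S₀ hS₀c
    have hC : ((n.choose (c i) : ℕ) : ℚ) ≠ 0 := by
      exact_mod_cast (Nat.choose_pos hcin).ne'
    have harith := arith n (c i) B.card (hpos i) hcin hbn hn2
    -- combine
    apply mul_right_cancel₀ hC
    have hnat : (((colorings V s c).filter fun f =>
          (∀ v ∈ A, f v = i) ∧ ∀ w ∈ B, f w ≠ i).card) * n.choose (c i)
        = ((n - (2 + B.card)).choose (c i - 2) * (if 2 ≤ c i then 1 else 0))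
            * (colorings V s c).card := by
      rw [hcount, hM, htot]
      ring
    have hq : ((((colorings V s c).filter fun f =>
          (∀ v ∈ A, f v = i) ∧ ∀ w ∈ B, f w ≠ i).card : ℕ) : ℚ) * (n.choose (c i) : ℚ)
        = (((n - (2 + B.card)).choose (c i - 2) * (if 2 ≤ c i then 1 else 0) : ℕ) : ℚ)
            * ((colorings V s c).card : ℚ) := by
      exact_mod_cast hnat
    rw [hq, harith]
    ring
  -- assemble
  have hsum2 : (∑ f ∈ colorings V s c, (isolatedCount V G s i f : ℚ) ^ 2)
      = (∑ f ∈ colorings V s c, (isolatedCount V G s i f : ℚ))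
        + ((colorings V s c).card : ℚ) *
          ((((c i).descFactorial 2 : ℚ) / (n.descFactorial 2 : ℚ)) *
            ∑ p ∈ P, (((n - c i).descFactorial
                ((G.neighborFinset p.1 ∪ G.neighborFinset p.2).card) : ℚ) /
              ((n - 2).descFactorial
                ((G.neighborFinset p.1 ∪ G.neighborFinset p.2).card) : ℚ))) := by
    have hcast : (∑ f ∈ colorings V s c, (isolatedCount V G s i f : ℚ) ^ 2)
        = ((∑ f ∈ colorings V s c, (isolatedCount V G s i f) ^ 2 : ℕ) : ℚ) := by
      push_cast; rfl
    rw [hcast, key]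
    push_cast
    rw [Finset.sum_congr rfl hpair, ← Finset.mul_sum, ← Finset.mul_sum]
  rw [hEL, hsum2, add_div, mul_div_cancel_left₀ _ hT0]
  ring
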